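/- Let U be a finite set of size u, let n ≥ 1 and m ≥ 0 be natural numbers, and set ε₀ = 2^{−m/n}. Let F be any family of subsets of U with |F| ≤ 2^m. Then the number of subsets S ⊆ U with |S| = n for which there exists P ∈ F with S ⊆ P and |P| ≤ ε₀·u/8 is at most 2^{−n}·C(u,n). Equivalently, if S is a uniformly random n-element subset of U, the probability that some P ∈ F satisfies S ⊆ P and |P| ≤ ε₀·u/8 is at most 2^{−n}. -/

import Mathlib

open Finset

private lemma desc_ineq (n k u : ℕ) (h : k ≤ u) :
    u ^ n * k.descFactorial n ≤ k ^ n * u.descFactorial n := by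
  induction n with
  | zero => simp
  | succ n ih =>
    rw [Nat.descFactorial_succ, Nat.descFactorial_succ, pow_succ, pow_succ]
    by_cases hnk : n ≤ k
    · have h1 : u * (k - n) ≤ k * (u - n) := by
        have := Nat.mul_le_mul_left k (Nat.sub_le_sub_right h n)
        zify [hnk, hnk.trans h] at *
        nlinarith
      calc u ^ n * u * ((k - n) * k.descFactorial n)
          = (u * (k - n)) * (u ^ n * k.descFactorial n) := by ring
        _ ≤ (k * (u - n)) * (k ^ n * u.descFactorial n) := Nat.mul_le_mul h1 ih
        _ = k ^ n * k * ((u - n) * u.descFactorial n) := by ring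
    · have : k - n = 0 := by omega
      simp [this]

private lemma choose_ratio (n k u : ℕ) (hu : 0 < u) (h : k ≤ u) :
    (k.choose n : ℝ) ≤ ((k : ℝ) / u) ^ n * u.choose n := by
  have hd := desc_ineq n k u h
  rw [Nat.descFactorial_eq_factorial_mul_choose, Nat.descFactorial_eq_factorial_mul_choose] at hd
  have hd2 : u ^ n * k.choose n ≤ k ^ n * u.choose n := by
    have hf : 0 < n.factorial := n.factorial_pos
    have : n.factorial * (u ^ n * k.choose n) ≤ n.factorial * (k ^ n * u.choose n) := by
      calc n.factorial * (u ^ n * k.choose n) = u ^ n * (n.factorial * k.choose n) := by ring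
        _ ≤ k ^ n * (n.factorial * u.choose n) := hd
        _ = n.factorial * (k ^ n * u.choose n) := by ring
    exact Nat.le_of_mul_le_mul_left this hf
  have hur : (0:ℝ) < (u:ℝ) ^ n := by positivity
  rw [div_pow, div_mul_eq_mul_div, le_div_iff₀ hur]
  calc (k.choose n : ℝ) * (u:ℝ) ^ n = ((u ^ n * k.choose n : ℕ) : ℝ) := by push_cast; ring
    _ ≤ ((k ^ n * u.choose n : ℕ) : ℝ) := by exact_mod_cast hd2
    _ = (k:ℝ) ^ n * u.choose n := by push_cast; ring

/-- Encoding/counting claim: for a universe `U` of size `u`, `ε₀ = 2^{-m/n}`, and any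
family `F` of at most `2^m` subsets of `U`, the number of `n`-element subsets `S ⊆ U`
for which some `P ∈ F` satisfies `S ⊆ P` and `|P| ≤ ε₀·u/8` is at most
`2^{-n}·C(u,n)`. -/
theorem few_bad_sets (U : Type*) [Fintype U] [DecidableEq U] (u n m : ℕ)
    (hu : Fintype.card U = u) (hn : 1 ≤ n) (ε₀ : ℝ)
    (hε₀ : ε₀ = (2 : ℝ) ^ (-(m : ℝ) / (n : ℝ)))
    (F : Finset (Finset U)) (hF : (F.card : ℝ) ≤ 2 ^ m) :
    ((Finset.univ.filter (fun S : Finset U => S.card = n ∧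
        ∃ P ∈ F, S ⊆ P ∧ (P.card : ℝ) ≤ ε₀ * u / 8)).card : ℝ)
      ≤ (2 : ℝ) ^ (-(n : ℝ)) * (u.choose n : ℝ) := by
  have hε₀pos : (0:ℝ) < ε₀ := by rw [hε₀]; positivity
  have hrhs0 : (0:ℝ) ≤ (2 : ℝ) ^ (-(n : ℝ)) * (u.choose n : ℝ) := by positivity
  by_cases hu0 : u = 0
  · have hempty : (Finset.univ.filter (fun S : Finset U => S.card = n ∧
        ∃ P ∈ F, S ⊆ P ∧ (P.card : ℝ) ≤ ε₀ * u / 8)) = ∅ := by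
      apply Finset.filter_false_of_mem
      intro S _ hS
      have h1 : S.card ≤ Fintype.card U := S.card_le_univ
      omega
    rw [hempty]; simpa using hrhs0
  have hupos : (0:ℝ) < (u:ℝ) := by positivity
  -- the family of small sets
  set F' := F.filter (fun P => (P.card : ℝ) ≤ ε₀ * u / 8) with hF'
  have hsub : (Finset.univ.filter (fun S : Finset U => S.card = n ∧
        ∃ P ∈ F, S ⊆ P ∧ (P.card : ℝ) ≤ ε₀ * u / 8)) ⊆
      F'.biUnion (fun P => P.powersetCard n) := by
    intro S hS
    simp only [mem_filter, mem_univ, true_and] at hS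
    obtain ⟨hSc, P, hPF, hSP, hPc⟩ := hS
    simp only [mem_biUnion, hF', mem_filter, mem_powersetCard]
    exact ⟨P, ⟨hPF, hPc⟩, hSP, hSc⟩
  have hcard := (Finset.card_le_card hsub).trans (Finset.card_biUnion_le)
  have hterm : ∀ P ∈ F', ((P.powersetCard n).card : ℝ)
      ≤ (ε₀ / 8) ^ n * u.choose n := by
    intro P hP
    simp only [hF', mem_filter] at hP
    rw [Finset.card_powersetCard]
    have hPu : P.card ≤ u := hu ▸ P.card_le_univ
    refine (choose_ratio n P.card u (Nat.pos_of_ne_zero hu0) hPu).trans ?_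
    have h1 : ((P.card : ℝ) / u) ≤ ε₀ / 8 := by
      rw [div_le_div_iff₀ hupos (by norm_num)]
      nlinarith [hP.2]
    have h2 : (0:ℝ) ≤ (P.card : ℝ) / u := by positivity
    exact mul_le_mul_of_nonneg_right (pow_le_pow_left₀ h2 h1 n) (by positivity)
  have hsum : (∑ P ∈ F', (P.powersetCard n).card : ℝ)
      ≤ F'.card * ((ε₀ / 8) ^ n * u.choose n) := by
    push_cast
    calc (∑ P ∈ F', ((P.powersetCard n).card : ℝ))
        ≤ ∑ _P ∈ F', (ε₀ / 8) ^ n * u.choose n := Finset.sum_le_sum hterm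
      _ = F'.card * ((ε₀ / 8) ^ n * u.choose n) := by rw [Finset.sum_const, nsmul_eq_mul]
  have hF'card : (F'.card : ℝ) ≤ 2 ^ m := by
    exact le_trans (by exact_mod_cast Finset.card_le_card (Finset.filter_subset _ _)) hF
  have hεn : ε₀ ^ n = (2:ℝ) ^ (-(m:ℝ)) := by
    rw [hε₀, ← Real.rpow_natCast ((2:ℝ) ^ (-(m:ℝ) / (n:ℝ))) n, ← Real.rpow_mul (by norm_num)]
    congr 1
    field_simp
  have key : ((Finset.univ.filter (fun S : Finset U => S.card = n ∧
        ∃ P ∈ F, S ⊆ P ∧ (P.card : ℝ) ≤ ε₀ * u / 8)).card : ℝ)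
      ≤ 2 ^ m * ((ε₀ / 8) ^ n * u.choose n) := by
    calc ((Finset.univ.filter _).card : ℝ)
        ≤ (∑ P ∈ F', (P.powersetCard n).card : ℝ) := by exact_mod_cast hcard
      _ ≤ F'.card * ((ε₀ / 8) ^ n * u.choose n) := hsum
      _ ≤ 2 ^ m * ((ε₀ / 8) ^ n * u.choose n) :=
          mul_le_mul_of_nonneg_right hF'card (by positivity)
  refine key.trans ?_
  have h8 : ((ε₀ / 8) ^ n : ℝ) = ε₀ ^ n * (1/8) ^ n := by rw [div_pow]; ring_nf; simp
  rw [h8, hεn]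
  have h2m : (2:ℝ) ^ m * ((2:ℝ) ^ (-(m:ℝ)) * (1/8) ^ n * u.choose n)
      = (1/8:ℝ) ^ n * u.choose n := by
    have : (2:ℝ) ^ m * (2:ℝ) ^ (-(m:ℝ)) = 1 := by
      rw [← Real.rpow_natCast 2 m, ← Real.rpow_add (by norm_num)]
      simp
    calc (2:ℝ) ^ m * ((2:ℝ) ^ (-(m:ℝ)) * (1/8) ^ n * u.choose n)
        = ((2:ℝ) ^ m * (2:ℝ) ^ (-(m:ℝ))) * ((1/8) ^ n * u.choose n) := by ring
      _ = (1/8:ℝ) ^ n * u.choose n := by rw [this, one_mul]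
  calc (2:ℝ) ^ m * ((2:ℝ) ^ (-(m:ℝ)) * (1/8) ^ n * u.choose n)
      = (1/8:ℝ) ^ n * u.choose n := h2m
    _ ≤ (1/2:ℝ) ^ n * u.choose n := by
        apply mul_le_mul_of_nonneg_right _ (by positivity)
        exact pow_le_pow_left₀ (by norm_num) (by norm_num) n
    _ = (2:ℝ) ^ (-(n:ℝ)) * u.choose n := by
        congr 1
        rw [Real.rpow_neg (by norm_num), Real.rpow_natCast]
        rw [one_div, inv_pow]
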